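/- Let (n_j) and (m_j) be sequences of integers > 1 with (m_j + 2)·j < n_j for all j ≥ 1, and let K₁, K₂ be the associated Knaster continua. For each t ∈ [0,1] there exists a sequence of continuous surjections f^t_j : [0,1] → [0,1] (j ≥ 0) with f^t_0 = id such that for all j ≥ 1: f^t_j(0) = 0; f^t_{j-1} ∘ g_{n_j} = g_{m_j} ∘ f^t_j; f^t_j([0, i[t,j]/j]) ⊆ [0, 1/m_j]; f^t_j([i[t,j]/j, (i[t,j]+1)/j]) = [0,1]; and f^t_j([(i[t,j]+1)/j, 1]) ⊆ [(m_j−1)/m_j, 1], where i[t,j] is an integer with 0 ≤ i[t,j] < j and t ∈ [i[t,j]/j, (i[t,j]+1)/j]. Consequently there is a continuous surjection f^t : K₁ → K₂ with f^t(e) = e, where e = (0,0,…). -/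

import Mathlib

open Set

noncomputable def vmap (t : ℝ) : ℝ :=
  if Even ⌊t⌋ then t - ⌊t⌋ else ⌊t⌋ + 1 - t

noncomputable def gmap (n : ℕ) (t : ℝ) : ℝ := vmap (n * t)

def Knaster (n : ℕ → ℕ) : Set (ℕ → ℝ) :=
  {x | (∀ j, x j ∈ Icc (0:ℝ) 1) ∧ ∀ j, x j = gmap (n j) (x (j + 1))}



lemma vmap_mem : ∀ t : ℝ, vmap t ∈ Icc (0:ℝ) 1 := by
  intro t
  unfold vmap
  have h1 := Int.floor_le t
  have h2 := Int.lt_floor_add_one t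
  split <;> constructor <;> linarith

lemma vmap_eq_self {t : ℝ} (h0 : 0 ≤ t) (h1 : t ≤ 1) : vmap t = t := by
  unfold vmap
  rcases eq_or_lt_of_le h1 with h | h
  · subst h; norm_num
  · have : ⌊t⌋ = 0 := Int.floor_eq_zero_iff.2 ⟨h0, h⟩
    rw [this]; norm_num

lemma vmap_add_two_int (t : ℝ) (k : ℤ) : vmap (t + 2 * k) = vmap t := by
  unfold vmap
  have hf : ⌊t + 2 * (k:ℝ)⌋ = ⌊t⌋ + 2 * k := by
    rw [show t + 2*(k:ℝ) = t + (2*k : ℤ) by push_cast; ring, Int.floor_add_intCast]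
  rw [hf]
  have hpar : Even (⌊t⌋ + 2 * k) ↔ Even ⌊t⌋ := by
    constructor <;> intro h
    · rcases h with ⟨r, hr⟩; exact ⟨r - k, by omega⟩
    · rcases h with ⟨r, hr⟩; exact ⟨r + k, by omega⟩
  rw [if_congr hpar rfl rfl]
  split <;> push_cast <;> ring

lemma vmap_neg (t : ℝ) : vmap (-t) = vmap t := by
  unfold vmap
  rcases eq_or_ne (⌊t⌋ : ℝ) t with h | h
  · have hfn : ⌊-t⌋ = -⌊t⌋ := by
      rw [show -t = ((-⌊t⌋ : ℤ) : ℝ) by push_cast; linarith, Int.floor_intCast]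
    rw [hfn]
    have : Even (-⌊t⌋) ↔ Even ⌊t⌋ := by
      constructor <;> rintro ⟨r, hr⟩ <;> exact ⟨-r, by omega⟩
    rw [if_congr this rfl rfl]
    split <;> push_cast <;> linarith
  · have htlt : (⌊t⌋:ℝ) < t := lt_of_le_of_ne (Int.floor_le t) h
    have hfn : ⌊-t⌋ = -⌊t⌋ - 1 := by
      apply Int.floor_eq_iff.2
      constructor <;> push_cast <;> [linarith [Int.lt_floor_add_one t]; linarith]
    rw [hfn]
    have hpar : Even (-⌊t⌋ - 1) ↔ ¬ Even ⌊t⌋ := by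
      constructor <;> intro hh
      · intro he; rcases hh with ⟨r,hr⟩; rcases he with ⟨s,hs⟩; omega
      · rcases Int.even_or_odd ⌊t⌋ with he | ho
        · exact absurd he hh
        · rcases ho with ⟨r, hr⟩; exact ⟨-r - 1, by omega⟩
    by_cases he : Even ⌊t⌋
    · rw [if_neg (by simpa [hpar] using he), if_pos he]; push_cast; ring
    · rw [if_pos (hpar.2 he), if_neg he]; push_cast; ring

lemma vmap_rep (t : ℝ) : ∃ e : ℤ, vmap t = t - 2 * e ∨ vmap t = -t + 2 * e := by
  unfold vmap
  rcases Int.even_or_odd ⌊t⌋ with ⟨k, hk⟩ | ⟨k, hk⟩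
  · refine ⟨k, Or.inl ?_⟩
    rw [if_pos ⟨k, hk⟩, hk]; push_cast; ring
  · refine ⟨k + 1, Or.inr ?_⟩
    rw [if_neg (by rw [hk]; exact Int.not_even_iff_odd.mpr ⟨k, rfl⟩), hk]; push_cast; ring

lemma vmap_int_mul (k : ℤ) (t : ℝ) : vmap (k * vmap t) = vmap (k * t) := by
  rcases vmap_rep t with ⟨e, h | h⟩
  · rw [h, show (k:ℝ) * (t - 2*e) = k*t + 2*((-(k*e):ℤ):ℝ) by push_cast; ring,
      vmap_add_two_int]
  · rw [h, show (k:ℝ) * (-t + 2*e) = -(k*t) + 2*((k*e:ℤ):ℝ) by push_cast; ring,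
      vmap_add_two_int, vmap_neg]

lemma vmap_fract_formula (t : ℝ) : vmap t = 1 - |2 * Int.fract (t/2) - 1| := by
  rcases Int.even_or_odd ⌊t⌋ with ⟨k, hk⟩ | ⟨k, hk⟩
  · have hb : (2*k:ℝ) ≤ t ∧ t < 2*k+1 := by
      have h1 := Int.floor_le t; have h2 := Int.lt_floor_add_one t
      rw [hk] at h1 h2; push_cast at h1 h2; constructor <;> linarith
    have hf2 : ⌊t/2⌋ = k := by
      apply Int.floor_eq_iff.2; constructor <;> push_cast <;> [linarith [hb.1]; linarith [hb.2]]
    rw [Int.fract, hf2]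
    have habs : 2 * (t/2 - k) - 1 ≤ 0 := by linarith [hb.2]
    rw [abs_of_nonpos habs]
    unfold vmap
    rw [if_pos ⟨k, hk⟩, hk]; push_cast; ring
  · have hb : (2*k+1:ℝ) ≤ t ∧ t < 2*k+2 := by
      have h1 := Int.floor_le t; have h2 := Int.lt_floor_add_one t
      rw [hk] at h1 h2; push_cast at h1 h2; constructor <;> linarith
    have hf2 : ⌊t/2⌋ = k := by
      apply Int.floor_eq_iff.2; constructor <;> push_cast <;> [linarith [hb.1]; linarith [hb.2]]
    rw [Int.fract, hf2]
    have habs : 0 ≤ 2 * (t/2 - k) - 1 := by linarith [hb.1]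
    rw [abs_of_nonneg habs]
    unfold vmap
    rw [if_neg (by rw [hk]; exact Int.not_even_iff_odd.mpr ⟨k, rfl⟩), hk]; push_cast; ring

lemma vmap_continuous : Continuous vmap := by
  have h : Continuous ((fun y : ℝ => 1 - |2 * y - 1|) ∘ Int.fract) := by
    apply ContinuousOn.comp_fract'' (by fun_prop) (by norm_num)
  have : vmap = ((fun y : ℝ => 1 - |2 * y - 1|) ∘ Int.fract) ∘ (fun t : ℝ => t / 2) := by
    funext t; simp [Function.comp, vmap_fract_formula t]
  rw [this]
  exact h.comp (by fun_prop)

lemma vmap_zero : vmap 0 = 0 := vmap_eq_self le_rfl zero_le_one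
lemma vmap_one : vmap 1 = 1 := vmap_eq_self zero_le_one le_rfl

lemma vmap_two_nat_mul_add (q : ℕ) (t : ℝ) : vmap (2 * q + t) = vmap t := by
  rw [show (2*(q:ℝ) + t) = t + 2 * ((q:ℤ):ℝ) by push_cast; ring, vmap_add_two_int]

def Good (f : ℝ → ℝ) (x : ℝ) : Prop :=
  Continuous f ∧ f 0 = 0 ∧ (∀ y ∈ Icc (0:ℝ) 1, f y ∈ Icc (0:ℝ) 1) ∧ x ∈ Icc (0:ℝ) 1 ∧ f x = 1

noncomputable def Hfun (f : ℝ → ℝ) (x : ℝ) (y : ℝ) : ℝ :=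
  (if 2*y ≤ x then f (vmap (2*y)) else 2 - f (vmap (2*y))) - 2*y

noncomputable def Cfun (f : ℝ → ℝ) (x : ℝ) (n K : ℕ) (s : ℝ) : ℝ :=
  (n*s - K) + Hfun f x (Int.fract ((n*s - K)/2))

noncomputable def Eof (n m K : ℕ) (x : ℝ) : ℝ :=
  if Even m then ((K:ℝ)+m)/n else ((K:ℝ)+m-1+x)/n

noncomputable def Bfun (f : ℝ→ℝ) (x : ℝ) (n m K : ℕ) (s : ℝ) : ℝ :=
  if s ≤ (K:ℝ)/n then f (vmap (n*s))
  else if s ≤ Eof n m K x then Cfun f x n K s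
  else if Even m then (m:ℝ) + f (vmap (n*s)) else (m:ℝ)+1 - f (vmap (n*s))

noncomputable def stepF (f : ℝ→ℝ) (x : ℝ) (n m K : ℕ) (s : ℝ) : ℝ :=
  vmap (Bfun f x n m K s / m)

section stage
variable {f : ℝ → ℝ} {x : ℝ} {n m K i J : ℕ}

lemma w_mem (hG : Good f x) (s : ℝ) : f (vmap (n * s)) ∈ Icc (0:ℝ) 1 :=
  hG.2.2.1 _ (vmap_mem _)

/-- key: vmap of Cfun -/
lemma vmap_Cfun (hG : Good f x) {K' : ℕ} (hK : K = 2 * K') (s : ℝ) :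
    vmap (Cfun f x n K s) = f (vmap (n * s)) := by
  obtain ⟨hfc, hf0, hfr, hx, hfx⟩ := hG
  set u : ℝ := n*s - K with hu
  set r : ℤ := ⌊u/2⌋ with hr
  set y : ℝ := Int.fract (u/2) with hy
  have hyy : 2 * y = u - 2*r := by rw [hy, Int.fract]; ring
  have hvy : vmap (2*y) = vmap (n*s) := by
    have : (n:ℝ)*s = 2*y + 2*(r + K') := by
      rw [hyy, hu]; push_cast [hK]; ring
    rw [this, show (2*y + 2*((r:ℝ) + K')) = 2*y + 2*((r + K' : ℤ):ℝ) by push_cast; ring,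
      vmap_add_two_int]
  have ha : f (vmap (2*y)) ∈ Icc (0:ℝ) 1 := hfr _ (vmap_mem _)
  have hC : Cfun f x n K s = 2*r + (if 2*y ≤ x then f (vmap (2*y)) else 2 - f (vmap (2*y))) := by
    rw [Cfun, Hfun, ← hy, ← hu, hyy]; ring
  rw [hC, ← hvy]
  split
  · rw [show (2*(r:ℝ) + f (vmap (2*y))) = f (vmap (2*y)) + 2*(r:ℝ) by ring,
      show (f (vmap (2*y)) + 2*(r:ℝ)) = f (vmap (2*y)) + 2*((r:ℤ):ℝ) by norm_num,
      vmap_add_two_int, vmap_eq_self ha.1 ha.2]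
  · rw [show (2*(r:ℝ) + (2 - f (vmap (2*y)))) = (- f (vmap (2*y))) + 2*(((r+1:ℤ)):ℝ) by
      push_cast; ring, vmap_add_two_int, vmap_neg, vmap_eq_self ha.1 ha.2]

lemma vmap_Bfun (hG : Good f x) {K' : ℕ} (hK : K = 2 * K') (s : ℝ) :
    vmap (Bfun f x n m K s) = f (vmap (n * s)) := by
  have ha := w_mem (n := n) hG s
  rw [Bfun]
  split
  · exact vmap_eq_self ha.1 ha.2
  split
  · exact vmap_Cfun hG hK s
  split
  · rename_i hme
    obtain ⟨m', hm'⟩ := hme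
    rw [show ((m:ℝ) + f (vmap (n*s))) = 2*(m':ℕ) + f (vmap (n*s)) by
        push_cast [hm']; ring, vmap_two_nat_mul_add, vmap_eq_self ha.1 ha.2]
  · rename_i hmo
    have hmo : Odd m := Nat.odd_iff.2 (Nat.not_even_iff.1 hmo)
    obtain ⟨m', hm'⟩ := hmo
    rw [show ((m:ℝ) + 1 - f (vmap (n*s))) = 2*((m'+1:ℕ)) + (- f (vmap (n*s))) by
        push_cast [hm']; ring, vmap_two_nat_mul_add, vmap_neg, vmap_eq_self ha.1 ha.2]

/-- semiconjugacy, global -/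
lemma step_semiconj (hG : Good f x) {K' : ℕ} (hK : K = 2 * K') (hm : 0 < m) (s : ℝ) :
    f (gmap n s) = gmap m (stepF f x n m K s) := by
  rw [gmap, gmap, stepF, show ((m:ℕ):ℝ) = ((m:ℤ):ℝ) by push_cast; rfl,
    vmap_int_mul (m:ℤ),
    show ((m:ℤ):ℝ) * (Bfun f x n m K s / ((m:ℤ):ℝ)) = Bfun f x n m K s by
      have hms : ((m:ℤ):ℝ) ≠ 0 := by exact_mod_cast hm.ne'
      field_simp]
  exact (vmap_Bfun hG hK s).symm

lemma vmap_K (hG : Good f x) {K' : ℕ} (hK : K = 2 * K') : f (vmap (K:ℝ)) = 0 := by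
  rw [show ((K:ℕ):ℝ) = 2*(K':ℕ) + 0 by push_cast [hK]; ring, vmap_two_nat_mul_add, vmap_zero,
    hG.2.1]

lemma Hfun_zero (hG : Good f x) : Hfun f x 0 = 0 := by
  rw [Hfun, if_pos (by rw [mul_zero]; exact hG.2.2.2.1.1)]
  rw [mul_zero, vmap_zero, hG.2.1]; ring

lemma Hfun_one (hG : Good f x) : Hfun f x 1 = 0 := by
  have hx1 : ¬ (2*(1:ℝ) ≤ x) := by push_neg; linarith [hG.2.2.2.1.2]
  rw [Hfun, if_neg hx1, show (2*(1:ℝ)) = 2*((1:ℕ):ℝ) + 0 by norm_num, vmap_two_nat_mul_add,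
    vmap_zero, hG.2.1]; ring

lemma Hfun_cont (hG : Good f x) : Continuous (Hfun f x) := by
  unfold Hfun
  apply Continuous.sub _ (by fun_prop)
  apply Continuous.if_le
  · exact hG.1.comp (vmap_continuous.comp (by fun_prop))
  · exact continuous_const.sub (hG.1.comp (vmap_continuous.comp (by fun_prop)))
  · fun_prop
  · fun_prop
  · intro y hy
    rw [hy, vmap_eq_self hG.2.2.2.1.1 hG.2.2.2.1.2, hG.2.2.2.2]; norm_num

lemma Cfun_cont (hG : Good f x) : Continuous (Cfun f x n K) := by
  unfold Cfun
  apply Continuous.add (by fun_prop)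
  have h1 : Continuous (Hfun f x ∘ Int.fract) :=
    ContinuousOn.comp_fract'' (Hfun_cont hG).continuousOn
      ((Hfun_zero hG).trans (Hfun_one hG).symm)
  exact h1.comp (by fun_prop)

lemma Cfun_at_P (hG : Good f x) (hn : 0 < n) : Cfun f x n K ((K:ℝ)/n) = 0 := by
  have hn' : (n:ℝ) ≠ 0 := Nat.cast_ne_zero.2 hn.ne'
  have hu : (n:ℝ)*((K:ℝ)/n) - K = 0 := by field_simp; ring
  rw [Cfun, hu]; norm_num [Int.fract_zero, Hfun_zero hG]

lemma Cfun_at_E (hG : Good f x) (hn : 0 < n) (hm : 0 < m) :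
    Cfun f x n K (Eof n m K x) = m := by
  have hn' : (n:ℝ) ≠ 0 := Nat.cast_ne_zero.2 hn.ne'
  rcases Nat.even_or_odd m with hme | hmo
  · obtain ⟨m', hm'⟩ := hme
    rw [Eof, if_pos ⟨m', hm'⟩]
    have hu : (n:ℝ)*(((K:ℝ)+m)/n) - K = m := by field_simp; ring
    rw [Cfun, hu, show ((m:ℕ):ℝ)/2 = ((m':ℕ):ℝ) by push_cast [hm']; ring]
    rw [Int.fract_natCast, Hfun_zero hG]; ring
  · obtain ⟨m'', hm''⟩ := hmo
    rw [Eof, if_neg (by rw [hm'']; simp [Nat.even_add_one, parity_simps])]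
    have hu : (n:ℝ)*(((K:ℝ)+m-1+x)/n) - K = (m:ℝ)-1+x := by field_simp; ring
    rw [Cfun, hu]
    have hx0 := hG.2.2.2.1.1; have hx1 := hG.2.2.2.1.2
    have hfr : Int.fract (((m:ℝ)-1+x)/2) = x/2 := by
      rw [show ((m:ℝ)-1+x)/2 = x/2 + ((m'':ℕ):ℤ) by push_cast [hm'']; ring,
        Int.fract_add_intCast]
      exact Int.fract_eq_self.2 ⟨by linarith, by linarith⟩
    rw [hfr, Hfun, show (2*(x/2)) = x by ring, if_pos le_rfl,
      vmap_eq_self hx0 hx1, hG.2.2.2.2]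
    ring

lemma P_le_E (hG : Good f x) (hn : 0 < n) (hm : 1 < m) : (K:ℝ)/n < Eof n m K x := by
  have hn' : (0:ℝ) < n := Nat.cast_pos.2 hn
  have hm' : (2:ℝ) ≤ m := by exact_mod_cast hm
  have hx0 := hG.2.2.2.1.1
  rw [Eof]; split
  · exact (div_lt_div_iff_of_pos_right hn').2 (by linarith)
  · exact (div_lt_div_iff_of_pos_right hn').2 (by linarith)

lemma Bfun_cont (hG : Good f x) (hn : 0 < n) (hm : 1 < m) {K' : ℕ} (hK : K = 2 * K') :
    Continuous (Bfun f x n m K) := by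
  have hw : Continuous (fun s : ℝ => f (vmap (n*s))) :=
    hG.1.comp (vmap_continuous.comp (by fun_prop))
  have hinner : Continuous (fun s : ℝ => if s ≤ Eof n m K x then Cfun f x n K s
      else if Even m then (m:ℝ) + f (vmap (n*s)) else (m:ℝ)+1 - f (vmap (n*s))) := by
    apply Continuous.if_le (Cfun_cont hG) _ continuous_id continuous_const
    · intro s hs
      subst hs
      rw [Cfun_at_E hG hn (by omega)]
      rcases Nat.even_or_odd m with hme | hmo
      · obtain ⟨m', hm'⟩ := hme
        rw [if_pos ⟨m', hm'⟩, Eof, if_pos ⟨m', hm'⟩]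
        have hn' : (n:ℝ) ≠ 0 := Nat.cast_ne_zero.2 hn.ne'
        rw [show (n:ℝ)*(((K:ℝ)+m)/n) = 2*(K':ℕ) + ((m:ℕ):ℝ) by push_cast [hK]; field_simp]
        rw [vmap_two_nat_mul_add, show ((m:ℕ):ℝ) = 2*((m':ℕ):ℝ) + 0 by push_cast [hm']; ring,
          vmap_two_nat_mul_add, vmap_zero, hG.2.1]
        ring
      · have hme : ¬ Even m := by rw [Nat.even_iff, Nat.odd_iff.1 hmo]; norm_num
        obtain ⟨m'', hm''⟩ := hmo
        rw [if_neg hme, Eof, if_neg hme]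
        have hn' : (n:ℝ) ≠ 0 := Nat.cast_ne_zero.2 hn.ne'
        rw [show (n:ℝ)*(((K:ℝ)+m-1+x)/n) = 2*(K':ℕ) + (((m:ℝ)-1) + x) by
          push_cast [hK]; field_simp; ring]
        rw [vmap_two_nat_mul_add, show ((m:ℝ)-1) + x = 2*((m'':ℕ):ℝ) + x by
          push_cast [hm'']; ring, vmap_two_nat_mul_add,
          vmap_eq_self hG.2.2.2.1.1 hG.2.2.2.1.2, hG.2.2.2.2]
        ring
    · rcases Nat.even_or_odd m with hme | hmo
      · simp only [if_pos hme]
        exact continuous_const.add (hG.1.comp (vmap_continuous.comp (by fun_prop)))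
      · have hme : ¬ Even m := by rw [Nat.even_iff, Nat.odd_iff.1 hmo]; norm_num
        simp only [if_neg hme]
        exact continuous_const.sub (hG.1.comp (vmap_continuous.comp (by fun_prop)))
  apply Continuous.if_le hw hinner continuous_id continuous_const
  intro s hs
  subst hs
  have hn' : (n:ℝ) ≠ 0 := Nat.cast_ne_zero.2 hn.ne'
  rw [show (n:ℝ)*((K:ℝ)/n) = (K:ℝ) by field_simp, vmap_K hG hK,
    if_pos (le_of_lt (P_le_E hG hn hm)), Cfun_at_P hG hn]

lemma vmap_Ico12 {t : ℝ} (h1 : 1 ≤ t) (h2 : t < 2) : vmap t = 2 - t := by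
  have hf : ⌊t⌋ = 1 := by
    apply Int.floor_eq_iff.2; constructor <;> push_cast <;> linarith
  rw [vmap, hf]
  norm_num [Int.even_iff]

lemma step_at_zero (hG : Good f x) (hn : 0 < n) : stepF f x n m K 0 = 0 := by
  rw [stepF, Bfun, if_pos (by positivity), mul_zero, vmap_zero, hG.2.1, zero_div, vmap_zero]

lemma step_at_P (hG : Good f x) (hn : 0 < n) {K' : ℕ} (hK : K = 2 * K') :
    stepF f x n m K ((K:ℝ)/n) = 0 := by
  have hn' : (n:ℝ) ≠ 0 := Nat.cast_ne_zero.2 hn.ne'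
  rw [stepF, Bfun, if_pos le_rfl, show (n:ℝ)*((K:ℝ)/n) = (K:ℝ) by field_simp,
    vmap_K hG hK, zero_div, vmap_zero]

lemma step_at_E (hG : Good f x) (hn : 0 < n) (hm : 1 < m) :
    stepF f x n m K (Eof n m K x) = 1 := by
  have hm' : (m:ℝ) ≠ 0 := Nat.cast_ne_zero.2 (by omega)
  rw [stepF, Bfun, if_neg (not_le.2 (P_le_E hG hn hm)), if_pos le_rfl,
    Cfun_at_E hG hn (by omega), div_self hm', vmap_one]

lemma step_left (hG : Good f x) (hm : 1 < m) {s : ℝ} (hs : s ≤ (K:ℝ)/n) :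
    stepF f x n m K s ∈ Icc 0 (1/(m:ℝ)) := by
  have hm' : (0:ℝ) < m := by exact_mod_cast Nat.zero_lt_of_lt hm
  rw [stepF, Bfun, if_pos hs]
  have ha := hG.2.2.1 _ (vmap_mem ((n:ℝ)*s))
  have h0 : (0:ℝ) ≤ f (vmap (n*s)) / m := div_nonneg ha.1 hm'.le
  have h1 : f (vmap (n*s)) / m ≤ 1/m := by
    rw [div_le_div_iff₀ hm' hm']; nlinarith [ha.2]
  rw [vmap_eq_self h0 (by
    calc f (vmap ((n:ℝ)*s)) / m ≤ 1/m := h1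
    _ ≤ 1 := by rw [div_le_one hm']; exact_mod_cast hm.le)]
  exact ⟨h0, h1⟩

lemma step_right (hG : Good f x) (hn : 0 < n) (hm : 1 < m) {s : ℝ}
    (hs : Eof n m K x ≤ s) :
    stepF f x n m K s ∈ Icc (((m:ℝ)-1)/m) 1 := by
  have hm0 : (0:ℝ) < m := by exact_mod_cast Nat.zero_lt_of_lt hm
  have hm2 : (2:ℝ) ≤ m := by exact_mod_cast hm
  have hPE := P_le_E (K := K) hG hn hm
  by_cases h1 : s ≤ (K:ℝ)/n
  · linarith
  by_cases h2 : s ≤ Eof n m K x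
  · have : s = Eof n m K x := le_antisymm h2 hs
    rw [this, step_at_E hG hn hm]
    constructor
    · rw [div_le_one hm0]; linarith
    · exact le_rfl
  · rw [stepF, Bfun, if_neg h1, if_neg h2]
    have ha := hG.2.2.1 _ (vmap_mem ((n:ℝ)*s))
    set a := f (vmap ((n:ℝ)*s)) with hadef
    split
    · have hB1 : (1:ℝ) ≤ ((m:ℝ) + a)/m := by rw [le_div_iff₀ hm0]; linarith [ha.1]
      have hB2 : ((m:ℝ) + a)/m < 2 := by rw [div_lt_iff₀ hm0]; linarith [ha.2]
      rw [vmap_Ico12 hB1 hB2, show 2 - ((m:ℝ)+a)/m = ((m:ℝ)-a)/m by field_simp; ring]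
      constructor
      · rw [div_le_div_iff₀ hm0 hm0]; nlinarith [ha.2]
      · rw [div_le_one hm0]; linarith [ha.1]
    · have hB1 : (1:ℝ) ≤ ((m:ℝ) + 1 - a)/m := by rw [le_div_iff₀ hm0]; linarith [ha.2]
      have hB2 : ((m:ℝ) + 1 - a)/m < 2 := by rw [div_lt_iff₀ hm0]; linarith [ha.1]
      rw [vmap_Ico12 hB1 hB2, show 2 - ((m:ℝ)+1-a)/m = ((m:ℝ)-1+a)/m by field_simp; ring]
      constructor
      · rw [div_le_div_iff₀ hm0 hm0]; nlinarith [ha.1]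
      · rw [div_le_one hm0]; linarith [ha.2]

lemma stage_main (hG : Good f x) {K' : ℕ} (hK : K = 2*K') (hn : 1 < n) (hm : 1 < m)
    {i J : ℕ} (hJ : 0 < J) (hiJ : i < J) (h1 : i*n ≤ K*J) (h2 : (K+m)*J ≤ (i+1)*n) :
    Good (stepF f x n m K) (Eof n m K x) ∧
    stepF f x n m K '' Icc 0 ((i:ℝ)/J) ⊆ Icc 0 (1/(m:ℝ)) ∧
    stepF f x n m K '' Icc ((i:ℝ)/J) (((i:ℝ)+1)/J) = Icc 0 1 ∧
    stepF f x n m K '' Icc (((i:ℝ)+1)/J) 1 ⊆ Icc (((m:ℝ)-1)/m) 1 ∧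
    stepF f x n m K '' Icc 0 1 = Icc 0 1 := by
  have hn0 : (0:ℝ) < n := by exact_mod_cast Nat.zero_lt_of_lt hn
  have hJ0 : (0:ℝ) < J := by exact_mod_cast hJ
  have hPE := P_le_E (n := n) (K := K) hG (Nat.zero_lt_of_lt hn) hm
  have hPi : (i:ℝ)/J ≤ (K:ℝ)/n := by
    rw [div_le_div_iff₀ hJ0 hn0]; exact_mod_cast h1
  have hEi : Eof n m K x ≤ ((i:ℝ)+1)/J := by
    have hstep : Eof n m K x ≤ ((K:ℝ)+m)/n := by
      rw [Eof]; split
      · exact le_rfl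
      · have hx1 := hG.2.2.2.1.2
        exact (div_le_div_iff_of_pos_right hn0).2 (by linarith)
    have h2' : ((K:ℝ)+m)/n ≤ ((i:ℝ)+1)/J := by
      rw [div_le_div_iff₀ hn0 hJ0]; exact_mod_cast h2
    exact hstep.trans h2'
  have hE1 : Eof n m K x ≤ 1 := by
    refine hEi.trans ?_
    rw [div_le_one hJ0]; exact_mod_cast hiJ
  have hE0 : (0:ℝ) ≤ Eof n m K x := le_of_lt (lt_of_le_of_lt (by positivity) hPE)
  have hcont : Continuous (stepF f x n m K) :=
    vmap_continuous.comp ((Bfun_cont hG (Nat.zero_lt_of_lt hn) hm hK).div_const _)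
  have hP0 : (0:ℝ) ≤ (K:ℝ)/n := by positivity
  have hgood : Good (stepF f x n m K) (Eof n m K x) :=
    ⟨hcont, step_at_zero hG (Nat.zero_lt_of_lt hn), fun y _ => vmap_mem _, ⟨hE0, hE1⟩,
      step_at_E hG (Nat.zero_lt_of_lt hn) hm⟩
  refine ⟨hgood, ?_, ?_, ?_, ?_⟩
  · rintro _ ⟨s, hs, rfl⟩
    exact step_left hG hm (hs.2.trans hPi)
  · apply Subset.antisymm
    · rintro _ ⟨s, _, rfl⟩; exact vmap_mem _
    · intro y hy
      have hsub := intermediate_value_Icc hPE.le hcont.continuousOn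
      rw [step_at_P hG (Nat.zero_lt_of_lt hn) hK, step_at_E hG (Nat.zero_lt_of_lt hn) hm] at hsub
      have := hsub hy
      exact image_mono (Icc_subset_Icc hPi hEi) this
  · rintro _ ⟨s, hs, rfl⟩
    exact step_right hG (Nat.zero_lt_of_lt hn) hm (hEi.trans hs.1)
  · apply Subset.antisymm
    · rintro _ ⟨s, _, rfl⟩; exact vmap_mem _
    · intro y hy
      have hsub := intermediate_value_Icc hPE.le hcont.continuousOn
      rw [step_at_P hG (Nat.zero_lt_of_lt hn) hK, step_at_E hG (Nat.zero_lt_of_lt hn) hm] at hsub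
      exact image_mono (Icc_subset_Icc hP0 hE1) (hsub hy)

end stage

lemma gmap_continuous (n : ℕ) : Continuous (gmap n) :=
  vmap_continuous.comp (by fun_prop)

/-- arithmetic for the choice of K -/
lemma K_facts (i n m J : ℕ) (hJ : 0 < J) (hgr : (m+2)*J < n) (hiJ : i < J) :
    i*n ≤ (2*((i*n + 2*J - 1)/(2*J)))*J ∧
    ((2*((i*n + 2*J - 1)/(2*J)))+m)*J ≤ (i+1)*n := by
  set a := i*n with ha
  set b := 2*J with hb
  set q := (a + b - 1)/b with hq
  have hd := Nat.div_add_mod (a + b - 1) b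
  have hr : (a + b - 1) % b < b := Nat.mod_lt _ (by omega)
  obtain ⟨c, hc⟩ : ∃ c, b * q = c := ⟨_, rfl⟩
  rw [hq] at hc
  rw [hc] at hd
  have e1 : (2*((i*n + 2*J - 1)/(2*J)))*J = c := by
    rw [← hc, ← ha, ← hb, ← hq]; ring
  have e2 : ((2*((i*n + 2*J - 1)/(2*J)))+m)*J = c + m*J := by
    rw [← hc, ← ha, ← hb, ← hq]; ring
  have e3 : (i+1)*n = a + n := by rw [ha]; ring
  obtain ⟨d, hdj⟩ : ∃ d, m*J = d := ⟨_, rfl⟩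
  have hgr' : d + b < n := by rw [← hdj, hb]; calc m*J + 2*J = (m+2)*J := by ring
                                                _ < n := hgr
  rw [e1, e2, e3, hdj]
  omega

/-- the index i(t,J) -/
lemma iof_facts {t : ℝ} (ht0 : 0 ≤ t) (ht1 : t ≤ 1) (J : ℕ) (hJ : 0 < J) :
    min (⌊t * J⌋.toNat) (J - 1) < J ∧
    ((min (⌊t * J⌋.toNat) (J - 1) : ℕ):ℝ)/J ≤ t ∧
    t ≤ (((min (⌊t * J⌋.toNat) (J - 1) : ℕ):ℝ)+1)/J := by
  have hJ0 : (0:ℝ) < J := by exact_mod_cast hJ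
  have hfl0 : 0 ≤ ⌊t * J⌋ := Int.floor_nonneg.2 (by positivity)
  refine ⟨by omega, ?_, ?_⟩
  · rw [div_le_iff₀ hJ0]
    have h1 : ((min (⌊t * J⌋.toNat) (J - 1) : ℕ):ℝ) ≤ ((⌊t * J⌋.toNat : ℕ):ℝ) := by
      exact_mod_cast Nat.min_le_left _ _
    have h2 : ((⌊t * J⌋.toNat : ℕ):ℝ) = ((⌊t * J⌋ : ℤ):ℝ) := by
      exact_mod_cast congrArg (fun z : ℤ => (z:ℝ)) (Int.toNat_of_nonneg hfl0)
    calc ((min (⌊t * J⌋.toNat) (J - 1) : ℕ):ℝ) ≤ ((⌊t * J⌋ : ℤ):ℝ) := by rw [← h2]; exact h1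
      _ ≤ t * J := Int.floor_le _
  · rw [le_div_iff₀ hJ0]
    rcases le_or_gt (⌊t * J⌋.toNat) (J - 1) with h | h
    · rw [min_eq_left h]
      have := Int.lt_floor_add_one (t * J)
      have h2 : ((⌊t * J⌋.toNat : ℕ):ℝ) = ((⌊t * J⌋ : ℤ):ℝ) := by
        exact_mod_cast congrArg (fun z : ℤ => (z:ℝ)) (Int.toNat_of_nonneg hfl0)
      rw [h2]; linarith
    · rw [min_eq_right h.le]
      have : ((J - 1 : ℕ):ℝ) + 1 = (J:ℝ) := by
        have : (1:ℕ) ≤ J := hJ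
        push_cast [Nat.cast_sub this]; ring
      rw [this]
      nlinarith

/-- downward chain -/
noncomputable def dseq (nseq : ℕ → ℕ) (N : ℕ) (s : ℝ) : ℕ → ℝ
  | 0 => s
  | (k+1) => gmap (nseq (N - (k+1))) (dseq nseq N s k)

noncomputable def thr (nseq : ℕ → ℕ) (N : ℕ) (s : ℝ) : ℕ → ℝ := fun j =>
  if j ≤ N then dseq nseq N s (N - j) else s / ∏ l ∈ Finset.Ico N j, (nseq l : ℝ)

section thread
variable {nseq : ℕ → ℕ} {N : ℕ} {s : ℝ}

lemma dseq_mem (hs : s ∈ Icc (0:ℝ) 1) : ∀ k, dseq nseq N s k ∈ Icc (0:ℝ) 1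
  | 0 => hs
  | (k+1) => vmap_mem _

lemma prod_ge_one (hn : ∀ l, 0 < nseq l) (a b : ℕ) :
    (1:ℝ) ≤ ∏ l ∈ Finset.Ico a b, (nseq l : ℝ) := by
  calc (1:ℝ) = ∏ _l ∈ Finset.Ico a b, (1:ℝ) := by simp
    _ ≤ ∏ l ∈ Finset.Ico a b, (nseq l : ℝ) := by
        apply Finset.prod_le_prod (fun i _ => zero_le_one)
        intro i _; exact_mod_cast hn i

lemma thr_mem (hs : s ∈ Icc (0:ℝ) 1) (hn : ∀ l, 0 < nseq l) (j : ℕ) :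
    thr nseq N s j ∈ Icc (0:ℝ) 1 := by
  rw [thr]
  split
  · exact dseq_mem hs _
  · have hp := prod_ge_one hn N j
    constructor
    · apply div_nonneg hs.1 (by linarith)
    · rw [div_le_one (by linarith)]; linarith [hs.2]

lemma thr_chain (hs : s ∈ Icc (0:ℝ) 1) (hn : ∀ l, 0 < nseq l) (j : ℕ) :
    thr nseq N s j = gmap (nseq j) (thr nseq N s (j+1)) := by
  rcases lt_trichotomy j N with h | h | h
  · rw [thr, thr, if_pos h.le, if_pos (by omega : j + 1 ≤ N)]
    have hk : N - j = (N - (j+1)) + 1 := by omega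
    rw [hk, dseq]
    congr 2
    omega
  · subst h
    rw [thr, thr, if_pos le_rfl, if_neg (by omega), Nat.sub_self, dseq]
    rw [Finset.prod_Ico_succ_top le_rfl, Finset.Ico_self, Finset.prod_empty, one_mul]
    have hnj : ((nseq j:ℕ):ℝ) ≠ 0 := by exact_mod_cast (hn j).ne'
    rw [gmap, mul_div_cancel₀ _ hnj, vmap_eq_self hs.1 hs.2]
  · rw [thr, thr, if_neg (by omega), if_neg (by omega)]
    rw [Finset.prod_Ico_succ_top (by omega : N ≤ j)]
    have hnj : ((nseq j:ℕ):ℝ) ≠ 0 := by exact_mod_cast (hn j).ne'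
    have hp := prod_ge_one hn N j
    rw [gmap, show (nseq j : ℝ) * (s / ((∏ l ∈ Finset.Ico N j, (nseq l : ℝ)) * nseq j))
        = s / ∏ l ∈ Finset.Ico N j, (nseq l : ℝ) by field_simp]
    exact (vmap_eq_self (div_nonneg hs.1 (by linarith))
      (by rw [div_le_one (by linarith)]; linarith [hs.2])).symm

lemma thr_at_N : thr nseq N s N = s := by
  rw [thr, if_pos le_rfl, Nat.sub_self]; rfl
end thread

noncomputable def buildP (nseq mseq Kseq : ℕ → ℕ) : ℕ → (ℝ → ℝ) × ℝ
  | 0 => (id, 1)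
  | (j+1) =>
      (stepF (buildP nseq mseq Kseq j).1 (buildP nseq mseq Kseq j).2
        (nseq j) (mseq j) (Kseq j),
       Eof (nseq j) (mseq j) (Kseq j) (buildP nseq mseq Kseq j).2)

theorem main_construction (nseq mseq : ℕ → ℕ)
    (hn : ∀ j, 1 < nseq j) (hm : ∀ j, 1 < mseq j)
    (hgrowth : ∀ j : ℕ, (mseq j + 2) * (j + 1) < nseq j)
    (t : ℝ) (ht : t ∈ Set.Icc (0:ℝ) 1) :
    ∃ (f : ℕ → ℝ → ℝ) (iseq : ℕ → ℕ),
      f 0 = id ∧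
      (∀ j : ℕ,
        ContinuousOn (f (j + 1)) (Set.Icc 0 1) ∧
        f (j + 1) '' Set.Icc 0 1 = Set.Icc 0 1 ∧
        f (j + 1) 0 = 0 ∧
        (∀ s ∈ Set.Icc (0:ℝ) 1, f j (gmap (nseq j) s) = gmap (mseq j) (f (j + 1) s)) ∧
        iseq (j + 1) < j + 1 ∧
        t ∈ Set.Icc ((iseq (j + 1) : ℝ) / (j + 1)) ((iseq (j + 1) + 1 : ℝ) / (j + 1)) ∧
        f (j + 1) '' Set.Icc 0 ((iseq (j + 1) : ℝ) / (j + 1)) ⊆ Set.Icc 0 (1 / (mseq j : ℝ)) ∧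
        f (j + 1) '' Set.Icc ((iseq (j + 1) : ℝ) / (j + 1)) ((iseq (j + 1) + 1 : ℝ) / (j + 1)) =
          Set.Icc 0 1 ∧
        f (j + 1) '' Set.Icc ((iseq (j + 1) + 1 : ℝ) / (j + 1)) 1 ⊆
          Set.Icc (((mseq j : ℝ) - 1) / (mseq j : ℝ)) 1) ∧
      ∃ F : Knaster nseq → Knaster mseq, Continuous F ∧ Function.Surjective F ∧
        (∀ x : Knaster nseq, ∀ j, (F x : ℕ → ℝ) j = f j ((x : ℕ → ℝ) j)) ∧
        ∀ he : (fun _ => (0:ℝ)) ∈ Knaster nseq, (F ⟨fun _ => 0, he⟩ : ℕ → ℝ) = fun _ => 0 := by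
  classical
  obtain ⟨ht0, ht1⟩ := ht
  set iseq : ℕ → ℕ := fun J => min (⌊t * J⌋.toNat) (J - 1) with hiseqdef
  set Kseq : ℕ → ℕ := fun j => 2 * ((iseq (j+1) * nseq j + 2*(j+1) - 1) / (2*(j+1))) with hKdef
  set fb : ℕ → (ℝ → ℝ) × ℝ := buildP nseq mseq Kseq with hfbdef
  have hiof : ∀ j : ℕ, iseq (j+1) < j + 1 ∧
      ((iseq (j+1) : ℕ):ℝ)/((j+1 : ℕ):ℝ) ≤ t ∧
      t ≤ (((iseq (j+1) : ℕ):ℝ)+1)/((j+1 : ℕ):ℝ) := fun j =>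
    iof_facts ht0 ht1 (j+1) (Nat.succ_pos j)
  have hKf : ∀ j : ℕ, iseq (j+1) * nseq j ≤ Kseq j * (j+1) ∧
      (Kseq j + mseq j) * (j+1) ≤ (iseq (j+1) + 1) * nseq j := fun j =>
    K_facts (iseq (j+1)) (nseq j) (mseq j) (j+1) (Nat.succ_pos j) (hgrowth j) (hiof j).1
  have hstep : ∀ j : ℕ, (fb (j+1)).1
      = stepF (fb j).1 (fb j).2 (nseq j) (mseq j) (Kseq j) := fun j => rfl
  have hGood : ∀ j, Good (fb j).1 (fb j).2 := by
    intro j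
    induction j with
    | zero => exact ⟨continuous_id, rfl, fun y hy => hy, ⟨zero_le_one, le_rfl⟩, rfl⟩
    | succ j ih =>
      exact (stage_main (i := iseq (j+1)) (J := j+1) ih rfl (hn j) (hm j)
        (Nat.succ_pos j) (hiof j).1 (hKf j).1 (hKf j).2).1
  have hbundle := fun j => stage_main (i := iseq (j+1)) (J := j+1) (hGood j) rfl (hn j) (hm j)
    (Nat.succ_pos j) (hiof j).1 (hKf j).1 (hKf j).2
  have hJcast : ∀ j : ℕ, ((j+1 : ℕ):ℝ) = (j:ℝ) + 1 := fun j => by push_cast; ring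
  refine ⟨fun j => (fb j).1, iseq, rfl, ?_, ?_⟩
  · intro j
    obtain ⟨hg, hL, hM, hRt, hfull⟩ := hbundle j
    refine ⟨(hGood (j+1)).1.continuousOn, ?_, (hGood (j+1)).2.1, ?_, (hiof j).1, ?_, ?_, ?_, ?_⟩
    · exact hfull
    · intro s _
      exact step_semiconj (hGood j) rfl (by have := hm j; omega) s
    · constructor
      · have := (hiof j).2.1; rw [hJcast j] at this; exact this
      · have := (hiof j).2.2; rw [hJcast j] at this; exact this
    · have := hL; rw [hJcast j] at this; exact this
    · have := hM; rw [hJcast j] at this; exact this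
    · have := hRt; rw [hJcast j] at this; exact this
  · -- the induced map on Knaster continua
    have hf01 : ∀ j, ∀ y ∈ Icc (0:ℝ) 1, (fb j).1 y ∈ Icc (0:ℝ) 1 := fun j => (hGood j).2.2.1
    have hsemi : ∀ j s, (fb j).1 (gmap (nseq j) s) = gmap (mseq j) ((fb (j+1)).1 s) := by
      intro j s
      exact step_semiconj (hGood j) rfl (by have := hm j; omega) s
    have hfzero : ∀ j, (fb j).1 0 = 0 := fun j => (hGood j).2.1
    have hmemF : ∀ x : Knaster nseq, (fun j => (fb j).1 (x.1 j)) ∈ Knaster mseq := by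
      intro x
      refine ⟨fun j => hf01 j _ (x.2.1 j), fun j => ?_⟩
      show (fb j).1 (x.1 j) = gmap (mseq j) ((fb (j+1)).1 (x.1 (j+1)))
      conv_lhs => rw [x.2.2 j]
      exact hsemi j _
    set Fmap : Knaster nseq → Knaster mseq := fun x => ⟨fun j => (fb j).1 (x.1 j), hmemF x⟩
      with hFdef
    have hnpos : ∀ l, 0 < nseq l := fun l => by have := hn l; omega
    refine ⟨Fmap, ?_, ?_, fun x j => rfl, ?_⟩
    · apply Continuous.subtype_mk
      apply continuous_pi
      intro j
      exact (hGood j).1.comp ((continuous_apply j).comp continuous_subtype_val)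
    · -- surjectivity
      intro y
      have hexists : ∀ N, ∃ s, s ∈ Icc (0:ℝ) 1 ∧ (fb N).1 s = y.1 N := by
        intro N
        cases N with
        | zero => exact ⟨y.1 0, y.2.1 0, rfl⟩
        | succ j =>
          have himg := (hbundle j).2.2.2.2
          rw [← hstep j] at himg
          have : y.1 (j+1) ∈ (fb (j+1)).1 '' Icc 0 1 := by rw [himg]; exact y.2.1 (j+1)
          obtain ⟨s, hs, hfs⟩ := this
          exact ⟨s, hs, hfs⟩
      choose sN hsmem hsval using hexists
      have hthrK : ∀ N, thr nseq N (sN N) ∈ Knaster nseq := fun N =>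
        ⟨fun j => thr_mem (hsmem N) hnpos j, fun j => thr_chain (hsmem N) hnpos j⟩
      have hdown : ∀ N k, k ≤ N →
          (fb (N - k)).1 (thr nseq N (sN N) (N - k)) = y.1 (N - k) := by
        intro N k
        induction k with
        | zero => intro _; simpa [thr_at_N] using hsval N
        | succ k ih =>
          intro hk1
          have hk : k ≤ N := by omega
          have hih := ih hk
          have hj1 : N - k = (N - (k+1)) + 1 := by omega
          rw [hj1] at hih
          set j := N - (k+1) with hjdef
          calc (fb j).1 (thr nseq N (sN N) j)
              = (fb j).1 (gmap (nseq j) (thr nseq N (sN N) (j+1))) := by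
                rw [← thr_chain (hsmem N) hnpos j]
            _ = gmap (mseq j) ((fb (j+1)).1 (thr nseq N (sN N) (j+1))) := hsemi j _
            _ = gmap (mseq j) (y.1 (j+1)) := by rw [hih]
            _ = y.1 j := (y.2.2 j).symm
      set T : ℕ → Set (ℕ → ℝ) :=
        fun N => Knaster nseq ∩ {x | ∀ j ≤ N, (fb j).1 (x j) = y.1 j} with hTdef
      have hTn : ∀ N, (T N).Nonempty := by
        intro N
        refine ⟨thr nseq N (sN N), hthrK N, ?_⟩
        intro j hj
        have := hdown N (N - j) (by omega)
        rwa [show N - (N - j) = j by omega] at this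
      have hclosedK : IsClosed (Knaster nseq) := by
        have hrw : Knaster nseq = (⋂ j, (fun x : ℕ → ℝ => x j) ⁻¹' Icc (0:ℝ) 1) ∩
            (⋂ j, {x : ℕ → ℝ | x j = gmap (nseq j) (x (j+1))}) := by
          ext x
          simp only [Knaster, mem_setOf_eq, mem_inter_iff, mem_iInter, mem_preimage]
        rw [hrw]
        exact (isClosed_iInter fun j => isClosed_Icc.preimage (continuous_apply j)).inter
          (isClosed_iInter fun j => isClosed_eq (continuous_apply j)
            ((gmap_continuous _).comp (continuous_apply (j+1))))
      have hcompactK : IsCompact (Knaster nseq) := by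
        apply IsCompact.of_isClosed_subset (isCompact_univ_pi fun _ : ℕ => isCompact_Icc)
          hclosedK
        intro x hx
        rw [mem_univ_pi]
        exact fun j => hx.1 j
      have hTclosed : ∀ N, IsClosed (T N) := by
        intro N
        apply hclosedK.inter
        have : {x : ℕ → ℝ | ∀ j ≤ N, (fb j).1 (x j) = y.1 j}
            = ⋂ j, ⋂ (_ : j ≤ N), {x : ℕ → ℝ | (fb j).1 (x j) = y.1 j} := by
          ext x; simp only [mem_setOf_eq, mem_iInter]
        rw [this]
        exact isClosed_iInter fun j => isClosed_iInter fun _ =>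
          isClosed_eq ((hGood j).1.comp (continuous_apply j)) continuous_const
      have hdec : ∀ N, T (N+1) ⊆ T N := by
        intro N x hx
        exact ⟨hx.1, fun j hj => hx.2 j (by omega)⟩
      have hT0c : IsCompact (T 0) :=
        hcompactK.of_isClosed_subset (hTclosed 0) inter_subset_left
      obtain ⟨xx, hxx⟩ := IsCompact.nonempty_iInter_of_sequence_nonempty_isCompact_isClosed
        T hdec hTn hT0c hTclosed
      rw [mem_iInter] at hxx
      refine ⟨⟨xx, (hxx 0).1⟩, ?_⟩
      apply Subtype.ext
      funext j
      exact (hxx j).2 j le_rfl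
    · intro he
      funext j
      exact hfzero j
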